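/- Let the Euclidean parabola have directrix the x-axis and focus (0,p), p > 0, i.e. the curve y = (x²+p²)/(2p). For a point K = (x,y) with y < 0 (below the directrix), the two tangent lines from K to the parabola meet at angle α satisfying cos α = -y/√((p-y)² + x²). -/

import Mathlib

open Real

/-- For the Euclidean parabola `y = (x²+p²)/(2p)` (focus `(0,p)`, directrix the `x`-axis)
and a point `K = (x,y)` with `y < 0`, the angle `α` under which the parabola is seen from
`K` (the angle at `K` between the two tangent lines, touching at parameters `t₁ ≠ t₂`)
satisfies `cos α = -y/√((p-y)² + x²)`. -/
theorem stmt_10 (p x y t₁ t₂ α : ℝ)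
    (hp : 0 < p) (hy : y < 0) (ht : t₁ ≠ t₂)
    (htan₁ : (t₁ ^ 2 + p ^ 2) / (2 * p) + (t₁ / p) * (x - t₁) = y)
    (htan₂ : (t₂ ^ 2 + p ^ 2) / (2 * p) + (t₂ / p) * (x - t₂) = y)
    (hα : Real.cos α =
      ((t₁ - x) * (t₂ - x) +
        ((t₁ ^ 2 + p ^ 2) / (2 * p) - y) * ((t₂ ^ 2 + p ^ 2) / (2 * p) - y)) /
      (Real.sqrt ((t₁ - x) ^ 2 + ((t₁ ^ 2 + p ^ 2) / (2 * p) - y) ^ 2) *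
        Real.sqrt ((t₂ - x) ^ 2 + ((t₂ ^ 2 + p ^ 2) / (2 * p) - y) ^ 2))) :
    Real.cos α = -y / Real.sqrt ((p - y) ^ 2 + x ^ 2) := by
  have hp' : p ≠ 0 := hp.ne'
  have hsub : t₁ - t₂ ≠ 0 := sub_ne_zero.mpr ht
  have h1 : t₁^2 - 2*t₁*x + 2*p*y - p^2 = 0 := by
    have h := htan₁; field_simp at h
    have hpm : p * (t₁^2 - 2*t₁*x + 2*p*y - p^2) = 0 := by linear_combination -p * h
    rcases mul_eq_zero.mp hpm with h' | h'
    · exact absurd h' hp'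
    · exact h'
  have h2 : t₂^2 - 2*t₂*x + 2*p*y - p^2 = 0 := by
    have h := htan₂; field_simp at h
    have hpm : p * (t₂^2 - 2*t₂*x + 2*p*y - p^2) = 0 := by linear_combination -p * h
    rcases mul_eq_zero.mp hpm with h' | h'
    · exact absurd h' hp'
    · exact h'
  have e1 : t₁ + t₂ = 2*x := by
    rcases mul_eq_zero.mp (show (t₁ - t₂) * (t₁ + t₂ - 2*x) = 0 by
      linear_combination h1 - h2) with h | h
    · exact absurd h hsub
    · linarith
  have e2 : t₁ * t₂ = 2*p*y - p^2 := by linear_combination t₁ * e1 - h1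
  have hx : x = (t₁ + t₂) / 2 := by linarith
  have hy' : y = (t₁ * t₂ + p^2) / (2*p) := by field_simp; linarith
  subst hx hy'
  set c : ℝ := (t₁ - t₂)^2 / (2*p) with hc
  have hcpos : 0 < c := by
    have h0 : (0:ℝ) < (t₁ - t₂)^2 := by positivity
    positivity
  -- the radicands
  have hA : (t₁ - (t₁+t₂)/2) ^ 2 + ((t₁ ^ 2 + p ^ 2) / (2 * p) - (t₁*t₂+p^2)/(2*p)) ^ 2
      = (t₁-t₂)^2 * (p^2+t₁^2) / (4*p^2) := by field_simp; ring
  have hB : (t₂ - (t₁+t₂)/2) ^ 2 + ((t₂ ^ 2 + p ^ 2) / (2 * p) - (t₁*t₂+p^2)/(2*p)) ^ 2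
      = (t₁-t₂)^2 * (p^2+t₂^2) / (4*p^2) := by field_simp; ring
  have hR : (p - (t₁*t₂+p^2)/(2*p)) ^ 2 + ((t₁+t₂)/2) ^ 2
      = (p^2+t₁^2) * (p^2+t₂^2) / (4*p^2) := by field_simp; ring
  have hRpos : 0 < (p - (t₁*t₂+p^2)/(2*p)) ^ 2 + ((t₁+t₂)/2) ^ 2 := by
    rw [hR]; positivity
  -- product of square roots
  have hprod : Real.sqrt ((t₁ - (t₁+t₂)/2) ^ 2 + ((t₁ ^ 2 + p ^ 2) / (2 * p) - (t₁*t₂+p^2)/(2*p)) ^ 2)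
      * Real.sqrt ((t₂ - (t₁+t₂)/2) ^ 2 + ((t₂ ^ 2 + p ^ 2) / (2 * p) - (t₁*t₂+p^2)/(2*p)) ^ 2)
      = c * Real.sqrt ((p - (t₁*t₂+p^2)/(2*p)) ^ 2 + ((t₁+t₂)/2) ^ 2) := by
    rw [hA, hB, hR, ← Real.sqrt_mul (by positivity)]
    rw [show (t₁-t₂)^2 * (p^2+t₁^2) / (4*p^2) * ((t₁-t₂)^2 * (p^2+t₂^2) / (4*p^2))
        = c^2 * ((p^2+t₁^2) * (p^2+t₂^2) / (4*p^2)) by rw [hc]; field_simp; ring]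
    rw [Real.sqrt_mul (by positivity), Real.sqrt_sq hcpos.le]
  -- numerator
  have hnum : (t₁ - (t₁+t₂)/2) * (t₂ - (t₁+t₂)/2) +
      ((t₁ ^ 2 + p ^ 2) / (2 * p) - (t₁*t₂+p^2)/(2*p)) * ((t₂ ^ 2 + p ^ 2) / (2 * p) - (t₁*t₂+p^2)/(2*p))
      = c * (-((t₁*t₂+p^2)/(2*p))) := by rw [hc]; field_simp; ring
  rw [hα, hprod, hnum]
  have hsR : 0 < Real.sqrt ((p - (t₁*t₂+p^2)/(2*p)) ^ 2 + ((t₁+t₂)/2) ^ 2) :=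
    Real.sqrt_pos.mpr hRpos
  rw [mul_div_mul_left _ _ hcpos.ne']
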